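/- For the hourly proportional billing game with quadratic costs C_h(ℓ) = a_2^h ℓ^2 + a_1^h ℓ (a_2^h > 0, a_1^h ≥ 0) and aggregate loads bounded by L̄^h, the price of anarchy satisfies PoA ≤ 1 + (3/4) · sup_h [ 1 / (1 + a_1^h/(a_2^h L̄^h)) ]. In particular PoA ≤ 7/4 always, and PoA → 1 as the ratio a_1^h/(a_2^h L̄^h) → ∞ uniformly in h. -/

import Mathlib

open Finset

/-- If `0 ≤ θ*A + θ^2*B` for all small positive `θ` and `0 ≤ B`, then `0 ≤ A`. -/
lemma limit_aux {A B : ℝ} (hB : 0 ≤ B)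
    (h : ∀ θ : ℝ, 0 < θ → θ ≤ 1 → 0 ≤ θ * A + θ ^ 2 * B) : 0 ≤ A := by
  by_contra hA
  push_neg at hA
  set θ : ℝ := min 1 (-A / (B + 1)) with hθ
  have hB1 : (0:ℝ) < B + 1 := by linarith
  have hθ0 : 0 < θ := lt_min one_pos (div_pos (by linarith) hB1)
  have hθ1 : θ ≤ 1 := min_le_left _ _
  have hθA : θ ≤ -A / (B + 1) := min_le_right _ _
  have h3 : θ * (B + 1) ≤ -A := (le_div_iff₀ hB1).mp hθA
  have h2 := h θ hθ0 hθ1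
  nlinarith [mul_le_mul_of_nonneg_left h3 hθ0.le, sq_nonneg θ, mul_pos hθ0 hθ0]

set_option maxHeartbeats 2000000 in
/-- Price-of-anarchy bound for the hourly proportional billing game with
quadratic costs: PoA ≤ 1 + (3/4)·sup_h 1/(1 + a₁ʰ/(a₂ʰ L̄ʰ)); in particular
PoA ≤ 7/4, and the bound tends to 1 as the ratio a₁ʰ/(a₂ʰ L̄ʰ) → ∞. -/
theorem hp_quadratic_poa_bound
    {N H : Type*} [Fintype N] [Fintype H] [DecidableEq N] [Nonempty H]
    (a1 a2 Lbar : H → ℝ) (ha2 : ∀ h, 0 < a2 h) (ha1 : ∀ h, 0 ≤ a1 h)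
    (hLbar : ∀ h, 0 < Lbar h)
    (X : N → Set (H → ℝ))
    (hXne : ∀ n, (X n).Nonempty)
    (hXcomp : ∀ n, IsCompact (X n))
    (hXconv : ∀ n, Convex ℝ (X n))
    (hXpos : ∀ n, ∀ z ∈ X n, ∀ h, 0 ≤ z h)
    (hbound : ∀ x : N → H → ℝ, (∀ n, x n ∈ X n) → ∀ h, (∑ n, x n h) ≤ Lbar h)
    (b : N → (N → H → ℝ) → ℝ)
    (hb : ∀ n x, b n x = ∑ h, x n h * (a2 h * (∑ m, x m h) + a1 h))
    (SC : (N → H → ℝ) → ℝ)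
    (hSC : ∀ x, SC x = ∑ h, (a2 h * (∑ n, x n h) ^ 2 + a1 h * (∑ n, x n h)))
    (NE : (N → H → ℝ) → Prop)
    (hNE : ∀ x, NE x ↔ (∀ n, x n ∈ X n) ∧
      ∀ n, ∀ y ∈ X n, b n x ≤ b n (Function.update x n y))
    (K : ℝ)
    (hK : K = 1 + 3 / 4 * Finset.univ.sup' Finset.univ_nonempty
      (fun h => 1 / (1 + a1 h / (a2 h * Lbar h)))) :
    (∀ x, NE x → ∀ y : N → H → ℝ, (∀ n, y n ∈ X n) → SC x ≤ K * SC y) ∧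
    K ≤ 7 / 4 ∧
    (∀ ε > (0 : ℝ), ∃ R : ℝ, ∀ ρ : ℝ, R ≤ ρ → 1 + 3 / 4 * (1 / (1 + ρ)) ≤ 1 + ε) := by
  classical
  obtain ⟨h₀⟩ := ‹Nonempty H›
  have hq : ∀ h, 0 ≤ a1 h / (a2 h * Lbar h) := fun h =>
    div_nonneg (ha1 h) (mul_pos (ha2 h) (hLbar h)).le
  have hfpos : ∀ h, 0 < 1 / (1 + a1 h / (a2 h * Lbar h)) := fun h => by
    have := hq h; positivity
  have hfle1 : ∀ h, 1 / (1 + a1 h / (a2 h * Lbar h)) ≤ 1 := fun h => by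
    have := hq h
    rw [div_le_one (by linarith)]; linarith
  have hsup_le : Finset.univ.sup' Finset.univ_nonempty
      (fun h => 1 / (1 + a1 h / (a2 h * Lbar h))) ≤ 1 :=
    Finset.sup'_le _ _ fun h _ => hfle1 h
  have hsup_pos : 0 < Finset.univ.sup' Finset.univ_nonempty
      (fun h => 1 / (1 + a1 h / (a2 h * Lbar h))) :=
    lt_of_lt_of_le (hfpos h₀)
      (Finset.le_sup' (fun h => 1 / (1 + a1 h / (a2 h * Lbar h))) (Finset.mem_univ h₀))
  have hK1 : 1 < K := by rw [hK]; linarith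
  have hK74 : K ≤ 7 / 4 := by rw [hK]; linarith
  have hK0 : (0:ℝ) < K := by linarith
  refine ⟨?_, hK74, ?_⟩
  · -- main PoA bound
    intro x hNEx y hyX
    obtain ⟨hx, hbest⟩ := (hNE x).1 hNEx
    -- Variational inequality derived from Nash equilibrium and convexity
    have VI : ∀ n, 0 ≤ ∑ h, (y n h - x n h) *
        (a2 h * (∑ m, x m h) + a1 h + a2 h * x n h) := by
      intro n
      apply limit_aux (B := ∑ h, a2 h * (y n h - x n h) ^ 2)
      · exact Finset.sum_nonneg fun h _ => mul_nonneg (ha2 h).le (sq_nonneg _)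
      · intro θ hθ0 hθ1
        set z : H → ℝ := fun h => x n h + θ * (y n h - x n h) with hz
        have hzX : z ∈ X n := by
          have hcomb := hXconv n (hx n) (hyX n)
            (show (0:ℝ) ≤ 1 - θ by linarith) hθ0.le (by ring : (1 - θ) + θ = 1)
          have hze : z = (1 - θ) • (x n) + θ • (y n) := by
            funext h'
            simp only [hz, Pi.add_apply, Pi.smul_apply, smul_eq_mul]
            ring
          rw [hze]; exact hcomb
        have hagg : ∀ h', (∑ m, Function.update x n z m h') =
            (∑ m, x m h') + θ * (y n h' - x n h') := by
          intro h'
          have step : ∀ m, Function.update x n z m h' =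
              x m h' + (if m = n then z h' - x n h' else 0) := by
            intro m
            rcases eq_or_ne m n with hm | hm
            · subst hm; simp
            · simp [Function.update_of_ne hm, hm]
          rw [Finset.sum_congr rfl fun m _ => step m, Finset.sum_add_distrib,
            Finset.sum_ite_eq' Finset.univ n]
          simp only [Finset.mem_univ, if_true, hz]
          ring
        have hbz : b n (Function.update x n z) =
            ∑ h, (x n h + θ * (y n h - x n h)) *
              (a2 h * ((∑ m, x m h) + θ * (y n h - x n h)) + a1 h) := by
          rw [hb]
          refine Finset.sum_congr rfl fun h _ => ?_
          rw [hagg h]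
          simp only [Function.update_self, hz]
        have hle := hbest n z hzX
        have expand : b n (Function.update x n z) - b n x =
            θ * (∑ h, (y n h - x n h) * (a2 h * (∑ m, x m h) + a1 h + a2 h * x n h)) +
            θ ^ 2 * (∑ h, a2 h * (y n h - x n h) ^ 2) := by
          rw [hbz, hb, Finset.mul_sum, Finset.mul_sum, ← Finset.sum_sub_distrib,
            ← Finset.sum_add_distrib]
          refine Finset.sum_congr rfl fun h _ => ?_
          ring
        linarith
    -- summed and per-hour bounded version
    have main : SC x ≤ ∑ h, (a2 h * ((∑ n, x n h) * (∑ n, y n h)) + a1 h * (∑ n, y n h)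
        + a2 h * (∑ n, y n h) ^ 2 / 4) := by
      have h0 : 0 ≤ ∑ h, ∑ n, (y n h - x n h) *
          (a2 h * (∑ m, x m h) + a1 h + a2 h * x n h) := by
        rw [Finset.sum_comm]
        exact Finset.sum_nonneg fun n _ => VI n
      have h1 : ∀ h, ∑ n, (y n h - x n h) * (a2 h * (∑ m, x m h) + a1 h + a2 h * x n h) ≤
          (a2 h * ((∑ n, x n h) * (∑ n, y n h)) + a1 h * (∑ n, y n h)
            + a2 h * (∑ n, y n h) ^ 2 / 4)
          - (a2 h * (∑ n, x n h) ^ 2 + a1 h * (∑ n, x n h)) := by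
        intro h
        have e : (∑ n, (y n h - x n h) * (a2 h * (∑ m, x m h) + a1 h + a2 h * x n h))
            = (∑ n, (y n h - x n h)) * (a2 h * (∑ m, x m h) + a1 h)
              + a2 h * (∑ n, (y n h * x n h - x n h ^ 2)) := by
          calc (∑ n, (y n h - x n h) * (a2 h * (∑ m, x m h) + a1 h + a2 h * x n h))
              = ∑ n, ((y n h - x n h) * (a2 h * (∑ m, x m h) + a1 h)
                + a2 h * (y n h * x n h - x n h ^ 2)) :=
                Finset.sum_congr rfl fun n _ => by ring
            _ = (∑ n, (y n h - x n h)) * (a2 h * (∑ m, x m h) + a1 h)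
                + a2 h * (∑ n, (y n h * x n h - x n h ^ 2)) := by
                rw [Finset.sum_add_distrib, ← Finset.sum_mul, ← Finset.mul_sum]
        rw [e, Finset.sum_sub_distrib]
        have hyb : ∀ n, y n h ≤ ∑ m, y m h := fun n =>
          Finset.single_le_sum (fun m _ => hXpos m (y m) (hyX m) h) (Finset.mem_univ n)
        have hb2 : ∑ n, (y n h * x n h - x n h ^ 2) ≤ (∑ n, y n h) ^ 2 / 4 := by
          calc ∑ n, (y n h * x n h - x n h ^ 2) ≤ ∑ n, (y n h) ^ 2 / 4 :=
                Finset.sum_le_sum fun n _ => by nlinarith [sq_nonneg (x n h - y n h / 2)]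
            _ ≤ ∑ n, y n h * (∑ m, y m h) / 4 := by
                refine Finset.sum_le_sum fun n _ => ?_
                have h1 := hyb n
                have h2 := hXpos n (y n) (hyX n) h
                nlinarith
            _ = (∑ n, y n h) ^ 2 / 4 := by
                rw [← Finset.sum_div, ← Finset.sum_mul]; ring
        have ha2h := (ha2 h).le
        nlinarith [mul_le_mul_of_nonneg_left hb2 ha2h]
      have hsum := Finset.sum_le_sum (s := (Finset.univ : Finset H)) fun h _ => h1 h
      rw [Finset.sum_sub_distrib] at hsum
      rw [hSC x]
      linarith
    -- per-hour smoothness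
    have smooth : ∀ h, a2 h * ((∑ n, x n h) * (∑ n, y n h)) + a1 h * (∑ n, y n h)
        + a2 h * (∑ n, y n h) ^ 2 / 4 ≤
        (K - 1) / K * (a2 h * (∑ n, x n h) ^ 2 + a1 h * (∑ n, x n h))
        + (a2 h * (∑ n, y n h) ^ 2 + a1 h * (∑ n, y n h)) := by
      intro h
      have hT0 : 0 ≤ ∑ n, x n h := Finset.sum_nonneg fun n _ => hXpos n (x n) (hx n) h
      have hS0 : 0 ≤ ∑ n, y n h := Finset.sum_nonneg fun n _ => hXpos n (y n) (hyX n) h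
      have hTL : (∑ n, x n h) ≤ Lbar h := hbound x hx h
      have hA2 := ha2 h
      have hA1 := ha1 h
      have hL := hLbar h
      have hAL : (0:ℝ) < a2 h * Lbar h := mul_pos hA2 hL
      have hALA : (0:ℝ) < a2 h * Lbar h + a1 h := by linarith
      -- the hour's smoothness parameter
      have hKh : 1 + 3 / 4 * (1 / (1 + a1 h / (a2 h * Lbar h))) ≤ K := by
        rw [hK]
        have := Finset.le_sup' (fun h => 1 / (1 + a1 h / (a2 h * Lbar h)))
          (Finset.mem_univ h)
        linarith
      have hfval : 1 / (1 + a1 h / (a2 h * Lbar h)) = a2 h * Lbar h / (a2 h * Lbar h + a1 h) := by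
        rw [div_eq_div_iff (by positivity) hALA.ne']
        field_simp
      rw [hfval] at hKh
      have hlam : 3 * (a2 h * Lbar h) / (7 * (a2 h * Lbar h) + 4 * a1 h) ≤ (K - 1) / K := by
        rw [div_le_div_iff₀ (by linarith) hK0]
        have e3 : 3 / 4 * (a2 h * Lbar h / (a2 h * Lbar h + a1 h)) * (a2 h * Lbar h + a1 h)
            = 3 / 4 * (a2 h * Lbar h) := by field_simp
        have h4 : 3 / 4 * (a2 h * Lbar h / (a2 h * Lbar h + a1 h)) ≤ K - 1 := by linarith
        have h5 := mul_le_mul_of_nonneg_right h4 hALA.le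
        rw [e3] at h5
        nlinarith
      have hgx0 : 0 ≤ a2 h * (∑ n, x n h) ^ 2 + a1 h * (∑ n, x n h) :=
        add_nonneg (mul_nonneg hA2.le (sq_nonneg _)) (mul_nonneg hA1 hT0)
      have h1 : 3 * a2 h * (∑ n, x n h) ^ 2 / 7 ≤
          3 * (a2 h * Lbar h) / (7 * (a2 h * Lbar h) + 4 * a1 h) *
            (a2 h * (∑ n, x n h) ^ 2 + a1 h * (∑ n, x n h)) := by
        rw [div_mul_eq_mul_div, div_le_div_iff₀ (by norm_num) (by linarith)]
        nlinarith [mul_nonneg (mul_nonneg hA2.le hA1)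
            (mul_nonneg hT0 (sub_nonneg.2 hTL)),
          mul_nonneg (mul_nonneg hA2.le hA1) (mul_nonneg hL.le hT0)]
      have h2 := mul_le_mul_of_nonneg_right hlam hgx0
      nlinarith [mul_nonneg hA2.le (sq_nonneg (6 * (∑ n, x n h) - 7 * (∑ n, y n h))),
        mul_nonneg hA2.le (sq_nonneg (∑ n, y n h))]
    have hsum2 := Finset.sum_le_sum (s := (Finset.univ : Finset H)) fun h _ => smooth h
    have hR1 : ∑ h, ((K - 1) / K * (a2 h * (∑ n, x n h) ^ 2 + a1 h * (∑ n, x n h))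
        + (a2 h * (∑ n, y n h) ^ 2 + a1 h * (∑ n, y n h)))
        = (K - 1) / K * SC x + SC y := by
      rw [hSC x, hSC y, Finset.sum_add_distrib, Finset.mul_sum]
    have final : SC x ≤ (K - 1) / K * SC x + SC y :=
      le_trans (le_trans main hsum2) (le_of_eq hR1)
    have e : K * ((K - 1) / K * SC x + SC y) = (K - 1) * SC x + K * SC y := by
      have hKne : K ≠ 0 := ne_of_gt hK0
      field_simp
    have := mul_le_mul_of_nonneg_left final hK0.le
    rw [e] at this
    linarith
  · -- asymptotics
    intro ε hε
    refine ⟨3 / (4 * ε), fun ρ hρ => ?_⟩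
    have hR : (0:ℝ) < 3 / (4 * ε) := by positivity
    have h1 : (0:ℝ) < 1 + ρ := by linarith
    have h2 : ε * (3 / (4 * ε)) = 3 / 4 := by field_simp
    have h3 : 3 / 4 * (1 / (1 + ρ)) ≤ ε := by
      rw [mul_one_div, div_le_iff₀ h1]
      nlinarith [mul_le_mul_of_nonneg_left hρ hε.le]
    linarith
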